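/- Let Γ=(G,σ) be a weighted signed graph and μ a measure on V. For any nonzero function f : V → ℝ there exists t' ∈ [0, max_{u∈V} |f(u)|] such that β^σ(V_f(t'), V_f(−t')) ≤ (½ Σ_{u,v∈V} w(u,v)|f(u) − σ(u,v)f(v)|)/(Σ_u μ(u)|f(u)|), where for t > 0, V_f(t) = {u : f(u) ≥ t} and V_f(−t) = {u : f(u) ≤ −t}, while V_f(0) = {u : f(u) ≥ 0} and V_f(−0) = {u : f(u) < 0}. -/

import Mathlib

open Finset Real

open scoped Classical

noncomputable section

namespace SignedGraph

variable {N : ℕ}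

/-- The degree `d(u) = Σ_v w(u,v)` of a vertex. -/
def deg (w : Fin N → Fin N → ℝ) (u : Fin N) : ℝ := ∑ v, w u v

/-- Hypotheses making `(w, sgn)` a weighted signed graph: `w` is a symmetric nonnegative
weight function vanishing on the diagonal and `sgn` is a symmetric `±1`-valued signature. -/
structure IsWSG {N : ℕ} (w : Fin N → Fin N → ℝ) (sgn : Fin N → Fin N → ℝ) : Prop where
  w_symm : ∀ u v, w u v = w v u
  w_nonneg : ∀ u v, 0 ≤ w u v
  w_loopless : ∀ u, w u u = 0
  sgn_symm : ∀ u v, sgn u v = sgn v u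
  sgn_pm : ∀ u v, sgn u v = 1 ∨ sgn u v = -1

/-- The signature obtained from `sgn` by switching with the function `θ : V → {±1}`. -/
def switchSgn (sgn : Fin N → Fin N → ℝ) (θ : Fin N → ℝ) : Fin N → Fin N → ℝ :=
  fun u v => θ u * sgn u v * θ v

/-- `|E(S,T)| = Σ_{u∈S, v∈T} w(u,v)`. -/
def EE (w : Fin N → Fin N → ℝ) (S T : Finset (Fin N)) : ℝ := ∑ u ∈ S, ∑ v ∈ T, w u v

/-- `|E⁺(S,T)|`: total weight of positive edges from `S` to `T`. -/
def Epos (w sgn : Fin N → Fin N → ℝ) (S T : Finset (Fin N)) : ℝ :=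
  ∑ u ∈ S, ∑ v ∈ T, if sgn u v = 1 then w u v else 0

/-- `|E⁻(S,T)|`: total weight of negative edges from `S` to `T`. -/
def Eneg (w sgn : Fin N → Fin N → ℝ) (S T : Finset (Fin N)) : ℝ :=
  ∑ u ∈ S, ∑ v ∈ T, if sgn u v = -1 then w u v else 0

/-- `vol_μ(S) = Σ_{u∈S} μ(u)`. -/
def vol (μ : Fin N → ℝ) (S : Finset (Fin N)) : ℝ := ∑ u ∈ S, μ u

/-- The signed bipartiteness ratio `β^σ(V₁,V₂)`. -/
def betaR (w sgn : Fin N → Fin N → ℝ) (μ : Fin N → ℝ) (V1 V2 : Finset (Fin N)) : ℝ :=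
  (2 * Epos w sgn V1 V2 + Eneg w sgn V1 V1 + Eneg w sgn V2 V2 +
      EE w (V1 ∪ V2) (V1 ∪ V2)ᶜ) / vol μ (V1 ∪ V2)

/-- The signed Cheeger constant `h₁^σ(μ)`: the minimum of `β^σ(V₁,V₂)` over all pairs of
disjoint subsets with nonempty union. -/
def h1 (w sgn : Fin N → Fin N → ℝ) (μ : Fin N → ℝ) : ℝ :=
  sInf {x | ∃ V1 V2 : Finset (Fin N),
    Disjoint V1 V2 ∧ (V1 ∪ V2).Nonempty ∧ x = betaR w sgn μ V1 V2}

/-- The upper threshold set `V_f(t) = {u : f(u) ≥ t}` (for `t = 0` this is `{u : f(u) ≥ 0}`). -/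
def Vp (f : Fin N → ℝ) (t : ℝ) : Finset (Fin N) :=
  Finset.univ.filter (fun u => t ≤ f u)

/-- The lower threshold set `V_f(−t) = {u : f(u) ≤ −t}` for `t > 0`, with the special
definition `V_f(−0) = {u : f(u) < 0}`. -/
def Vm (f : Fin N → ℝ) (t : ℝ) : Finset (Fin N) :=
  if t = 0 then Finset.univ.filter (fun u => f u < 0)
  else Finset.univ.filter (fun u => f u ≤ -t)

private lemma ind_mul_ind (a c t : ℝ) :
    (if t ≤ a then (1:ℝ) else 0) * (if t ≤ c then 1 else 0) =
      if t ≤ min a c then 1 else 0 := by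
  by_cases h1 : t ≤ a <;> by_cases h2 : t ≤ c <;> simp [h1, h2, le_min_iff]

private lemma key_ineq (a c : ℝ) :
    min (max a 0) (max (-c) 0) + min (max c 0) (max (-a) 0)
      + (|a| + |c|) / 2 - min |a| |c| ≤ |a - c| / 2 := by
  rcases le_total a 0 with ha|ha <;> rcases le_total c 0 with hc|hc <;>
    rcases le_total a c with h|h <;>
      simp [abs_of_nonpos, abs_of_nonneg, max_def, min_def, *] <;>
        first | linarith | (split_ifs <;> linarith)

private lemma sum_gap_ind (n : ℕ) (b : ℕ → ℝ)
    (hmono : ∀ i j, i < j → j < n → b i < b j) (hb0 : b 0 = 0)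
    (a : ℝ) (ha : a ≤ 0 ∨ ∃ j, j < n ∧ b j = a) :
    ∑ i ∈ Finset.range (n - 1), (b (i+1) - b i) * (if b (i+1) ≤ a then 1 else 0)
      = max a 0 := by
  by_cases h0 : a ≤ 0
  · have hz : ∀ i ∈ Finset.range (n-1), (b (i+1) - b i) * (if b (i+1) ≤ a then (1:ℝ) else 0) = 0 := by
      intro i hi
      have hi' : i + 1 < n := by have := Finset.mem_range.mp hi; omega
      have hlt : b 0 < b (i+1) := hmono 0 (i+1) (by omega) hi'
      rw [if_neg (by linarith), mul_zero]
    rw [Finset.sum_congr rfl hz, Finset.sum_const_zero]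
    exact (max_eq_right h0).symm
  · push_neg at h0
    rcases ha with h | ⟨j, hj, hbj⟩
    · linarith
    have hj0 : 0 < j := by
      rcases Nat.eq_zero_or_pos j with rfl | h; · rw [hb0] at hbj; linarith
      · exact h
    have hrw : ∀ i ∈ Finset.range (n-1),
        (b (i+1) - b i) * (if b (i+1) ≤ a then (1:ℝ) else 0)
          = if i < j then (b (i+1) - b i) else 0 := by
      intro i hi
      have hi' : i + 1 < n := by have := Finset.mem_range.mp hi; omega
      have hcond : (b (i+1) ≤ a) ↔ i + 1 ≤ j := by
        constructor
        · intro h; by_contra hc; push_neg at hc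
          have := hmono j (i+1) hc hi'; rw [hbj] at this; linarith
        · intro h
          rcases eq_or_lt_of_le h with rfl | hlt
          · exact le_of_eq hbj
          · exact le_of_lt (hbj ▸ hmono (i+1) j hlt hj)
      rw [if_congr hcond rfl rfl]
      by_cases h : i + 1 ≤ j
      · rw [if_pos h, if_pos (by omega), mul_one]
      · rw [if_neg h, if_neg (by omega), mul_zero]
    rw [Finset.sum_congr rfl hrw, ← Finset.sum_filter]
    have hfil : (Finset.range (n-1)).filter (fun i => i < j) = Finset.range j := by
      ext i; simp only [Finset.mem_filter, Finset.mem_range]; omega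
    rw [hfil, Finset.sum_range_sub, hb0, hbj, sub_zero]
    exact (max_eq_left h0.le).symm

private lemma double_sum_filter {N : ℕ} (p q : Fin N → Prop) [DecidablePred p] [DecidablePred q]
    (g : Fin N → Fin N → ℝ) :
    ∑ u ∈ Finset.univ.filter p, ∑ v ∈ Finset.univ.filter q, g u v
      = ∑ u, ∑ v, ((if p u then (1:ℝ) else 0) * (if q v then 1 else 0)) * g u v := by
  rw [Finset.sum_filter]
  refine Finset.sum_congr rfl fun u _ => ?_
  rw [Finset.sum_filter]
  by_cases hp : p u
  · simp only [if_pos hp, one_mul]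
    refine Finset.sum_congr rfl fun v _ => ?_
    by_cases hq : q v <;> simp [hq]
  · simp [hp]

private lemma vm_pos {N : ℕ} (f : Fin N → ℝ) (t : ℝ) (ht : 0 < t) :
    Vm f t = Finset.univ.filter (fun u => t ≤ -f u) := by
  rw [Vm, if_neg ht.ne']
  ext u
  simp only [Finset.mem_filter, Finset.mem_univ, true_and]
  constructor <;> intro <;> linarith

private lemma union_pos {N : ℕ} (f : Fin N → ℝ) (t : ℝ) (ht : 0 < t) :
    Vp f t ∪ Vm f t = Finset.univ.filter (fun u => t ≤ |f u|) := by
  rw [Vp, vm_pos f t ht]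
  ext u
  simp only [Finset.mem_union, Finset.mem_filter, Finset.mem_univ, true_and, le_abs]

private lemma num_eq {N : ℕ} (w sgn : Fin N → Fin N → ℝ) (f : Fin N → ℝ) (t : ℝ) (ht : 0 < t) :
    2 * Epos w sgn (Vp f t) (Vm f t) + Eneg w sgn (Vp f t) (Vp f t)
      + Eneg w sgn (Vm f t) (Vm f t) + EE w (Vp f t ∪ Vm f t) (Vp f t ∪ Vm f t)ᶜ
    = ∑ u, ∑ v,
        (2 * (((if t ≤ f u then (1:ℝ) else 0) * (if t ≤ -f v then 1 else 0)) *
            (if sgn u v = 1 then w u v else 0))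
         + ((if t ≤ f u then (1:ℝ) else 0) * (if t ≤ f v then 1 else 0)) *
            (if sgn u v = -1 then w u v else 0)
         + ((if t ≤ -f u then (1:ℝ) else 0) * (if t ≤ -f v then 1 else 0)) *
            (if sgn u v = -1 then w u v else 0)
         + ((if t ≤ |f u| then (1:ℝ) else 0) * (1 - (if t ≤ |f v| then 1 else 0))) * w u v) := by
  have h1 : Epos w sgn (Vp f t) (Vm f t)
      = ∑ u, ∑ v, ((if t ≤ f u then (1:ℝ) else 0) * (if t ≤ -f v then 1 else 0)) *
          (if sgn u v = 1 then w u v else 0) := by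
    rw [Epos, Vp, vm_pos f t ht, double_sum_filter]
  have h2 : Eneg w sgn (Vp f t) (Vp f t)
      = ∑ u, ∑ v, ((if t ≤ f u then (1:ℝ) else 0) * (if t ≤ f v then 1 else 0)) *
          (if sgn u v = -1 then w u v else 0) := by
    rw [Eneg, Vp, double_sum_filter]
  have h3 : Eneg w sgn (Vm f t) (Vm f t)
      = ∑ u, ∑ v, ((if t ≤ -f u then (1:ℝ) else 0) * (if t ≤ -f v then 1 else 0)) *
          (if sgn u v = -1 then w u v else 0) := by
    rw [Eneg, vm_pos f t ht, double_sum_filter]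
  have h4 : EE w (Vp f t ∪ Vm f t) (Vp f t ∪ Vm f t)ᶜ
      = ∑ u, ∑ v, ((if t ≤ |f u| then (1:ℝ) else 0) * (1 - (if t ≤ |f v| then 1 else 0))) *
          w u v := by
    rw [EE, union_pos f t ht]
    have hc : (Finset.univ.filter (fun u => t ≤ |f u|))ᶜ
        = Finset.univ.filter (fun u : Fin N => ¬ t ≤ |f u|) := by
      ext u; simp
    rw [hc, double_sum_filter]
    refine Finset.sum_congr rfl fun u _ => Finset.sum_congr rfl fun v _ => ?_
    by_cases h : t ≤ |f v| <;> simp [h]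
  rw [h1, h2, h3, h4, Finset.mul_sum]
  rw [← Finset.sum_add_distrib, ← Finset.sum_add_distrib, ← Finset.sum_add_distrib]
  refine Finset.sum_congr rfl fun u _ => ?_
  rw [Finset.mul_sum, ← Finset.sum_add_distrib, ← Finset.sum_add_distrib,
    ← Finset.sum_add_distrib]

/-- For any nonzero `f : V → ℝ` there is `t' ∈ [0, max_u |f(u)|]` with
`β^σ(V_f(t'), V_f(−t')) ≤ (½ Σ_{u,v} w(u,v)|f(u) − σ(u,v)f(v)|)/(Σ_u μ(u)|f(u)|)`. -/
theorem l1_threshold_lemma {N : ℕ} (hN : 0 < N) (w sgn : Fin N → Fin N → ℝ)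
    (hG : IsWSG w sgn) (μ : Fin N → ℝ) (hμ : ∀ u, 0 < μ u)
    (f : Fin N → ℝ) (hf : f ≠ 0) :
    ∃ t' ∈ Set.Icc (0 : ℝ) (⨆ u, |f u|),
      betaR w sgn μ (Vp f t') (Vm f t') ≤
        ((1 : ℝ) / 2 * ∑ u, ∑ v, w u v * |f u - sgn u v * f v|) /
          (∑ u, μ u * |f u|) := by
  classical
  obtain ⟨u0, hu0⟩ : ∃ u, f u ≠ 0 := by
    by_contra h; push_neg at h; exact hf (funext h)
  set D := ∑ u, μ u * |f u| with hD
  set Tar := (1 : ℝ) / 2 * ∑ u, ∑ v, w u v * |f u - sgn u v * f v| with hTar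
  set R := Tar / D with hRdef
  have hDpos : 0 < D := by
    apply Finset.sum_pos' (fun u _ => mul_nonneg (hμ u).le (abs_nonneg _))
    exact ⟨u0, Finset.mem_univ _, mul_pos (hμ u0) (abs_pos.mpr hu0)⟩
  -- breakpoints
  set B : Finset ℝ := insert 0 (Finset.image (fun u => |f u|) Finset.univ) with hB
  set L := B.sort (· ≤ ·) with hL
  set n := L.length with hn
  set b : ℕ → ℝ := fun i => L.getD i 0 with hb
  have hsort : L.Pairwise (· < ·) := B.sortedLT_sort.pairwise
  have hmono : ∀ i j, i < j → j < n → b i < b j := by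
    intro i j hij hj
    have hi : i < n := lt_trans hij hj
    rw [hb]; simp only
    rw [List.getD_eq_getElem L 0 hi, List.getD_eq_getElem L 0 hj]
    exact List.pairwise_iff_getElem.mp hsort i j hi hj hij
  have hmem : ∀ a ∈ B, ∃ j, j < n ∧ b j = a := by
    intro a ha
    have : a ∈ L := (Finset.mem_sort _).mpr ha
    obtain ⟨j, hj, hja⟩ := List.mem_iff_getElem.mp this
    exact ⟨j, hj, by rw [hb]; simp only; rw [List.getD_eq_getElem L 0 hj]; exact hja⟩
  have hbB : ∀ j, j < n → b j ∈ B := by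
    intro j hj
    rw [hb]; simp only; rw [List.getD_eq_getElem L 0 hj]
    exact (Finset.mem_sort _).mp (List.getElem_mem hj)
  have hBnonneg : ∀ a ∈ B, 0 ≤ a := by
    intro a ha
    rcases Finset.mem_insert.mp ha with rfl | h
    · exact le_refl 0
    · obtain ⟨u, _, rfl⟩ := Finset.mem_image.mp h; exact abs_nonneg _
  have habsB : ∀ u, |f u| ∈ B := fun u =>
    Finset.mem_insert_of_mem (Finset.mem_image_of_mem _ (Finset.mem_univ u))
  have hnpos : 0 < n := by
    obtain ⟨j, hj, _⟩ := hmem 0 (Finset.mem_insert_self _ _); omega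
  have hb0 : b 0 = 0 := by
    obtain ⟨j, hj, hj0⟩ := hmem 0 (Finset.mem_insert_self _ _)
    have h0le : 0 ≤ b 0 := hBnonneg _ (hbB 0 hnpos)
    rcases Nat.eq_zero_or_pos j with rfl | hjpos
    · exact hj0
    · have := hmono 0 j hjpos hj; linarith
  have hn2 : 2 ≤ n := by
    obtain ⟨j, hj, hjv⟩ := hmem _ (habsB u0)
    have : j ≠ 0 := by
      intro h; rw [h, hb0] at hjv
      exact hu0 (abs_eq_zero.mp hjv.symm)
    omega
  have htpos : ∀ i, i + 1 < n → 0 < b (i+1) := fun i hi =>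
    hb0 ▸ hmono 0 (i+1) (Nat.succ_pos i) hi
  -- the OK predicate
  set OK : ℝ → Prop := fun a => a ≤ 0 ∨ ∃ j, j < n ∧ b j = a with hOK
  have hOKabs : ∀ u, OK |f u| := fun u => Or.inr (hmem _ (habsB u))
  have hOKf : ∀ u, OK (f u) := by
    intro u
    rcases le_total (f u) 0 with h | h
    · exact Or.inl h
    · rw [show f u = |f u| from (abs_of_nonneg h).symm]; exact hOKabs u
  have hOKnf : ∀ u, OK (-f u) := by
    intro u
    rcases le_total (f u) 0 with h | h
    · rw [show -f u = |f u| from (abs_of_nonpos h).symm]; exact hOKabs u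
    · exact Or.inl (by linarith)
  have hOKmin : ∀ a c, OK a → OK c → OK (min a c) := by
    intro a c ha hc
    rcases ha with ha | ha
    · exact Or.inl (min_le_of_left_le ha)
    rcases hc with hc | hc
    · exact Or.inl (min_le_of_right_le hc)
    rcases min_choice a c with h | h
    · rw [h]; exact Or.inr ha
    · rw [h]; exact Or.inr hc
  -- gap sums
  have hgap1 : ∀ a, OK a →
      ∑ i ∈ Finset.range (n-1), (b (i+1) - b i) * (if b (i+1) ≤ a then (1:ℝ) else 0)
        = max a 0 := fun a ha => sum_gap_ind n b hmono hb0 a ha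
  have hgap2 : ∀ a c, OK a → OK c →
      ∑ i ∈ Finset.range (n-1), (b (i+1) - b i) *
          ((if b (i+1) ≤ a then (1:ℝ) else 0) * (if b (i+1) ≤ c then 1 else 0))
        = min (max a 0) (max c 0) := by
    intro a c ha hc
    have h1 : ∀ i ∈ Finset.range (n-1), (b (i+1) - b i) *
        ((if b (i+1) ≤ a then (1:ℝ) else 0) * (if b (i+1) ≤ c then 1 else 0))
        = (b (i+1) - b i) * (if b (i+1) ≤ min a c then 1 else 0) := fun i _ => by
      rw [ind_mul_ind]
    rw [Finset.sum_congr rfl h1, hgap1 _ (hOKmin a c ha hc)]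
    exact max_min_distrib_right a c 0
  -- numerator and denominator as functions of the threshold
  set Dent : ℝ → ℝ := fun t => vol μ (Vp f t ∪ Vm f t) with hDent
  set Numt : ℝ → ℝ := fun t => 2 * Epos w sgn (Vp f t) (Vm f t)
      + Eneg w sgn (Vp f t) (Vp f t) + Eneg w sgn (Vm f t) (Vm f t)
      + EE w (Vp f t ∪ Vm f t) (Vp f t ∪ Vm f t)ᶜ with hNumt
  set E : Fin N → Fin N → ℝ → ℝ := fun u v t =>
        (2 * (((if t ≤ f u then (1:ℝ) else 0) * (if t ≤ -f v then 1 else 0)) *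
            (if sgn u v = 1 then w u v else 0))
         + ((if t ≤ f u then (1:ℝ) else 0) * (if t ≤ f v then 1 else 0)) *
            (if sgn u v = -1 then w u v else 0)
         + ((if t ≤ -f u then (1:ℝ) else 0) * (if t ≤ -f v then 1 else 0)) *
            (if sgn u v = -1 then w u v else 0)
         + ((if t ≤ |f u| then (1:ℝ) else 0) * (1 - (if t ≤ |f v| then 1 else 0))) * w u v)
    with hE
  have hNum : ∀ t : ℝ, 0 < t → Numt t = ∑ u, ∑ v, E u v t := fun t ht => num_eq w sgn f t ht
  have hDenf : ∀ t : ℝ, 0 < t → Dent t = ∑ u, μ u * (if t ≤ |f u| then (1:ℝ) else 0) := by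
    intro t ht
    rw [hDent]; simp only
    rw [vol, union_pos f t ht, Finset.sum_filter]
    refine Finset.sum_congr rfl fun u _ => ?_
    by_cases h : t ≤ |f u| <;> simp [h]
  set J : Fin N → Fin N → ℝ := fun u v =>
      2 * (if sgn u v = 1 then w u v else 0) * min (max (f u) 0) (max (-f v) 0)
      + (if sgn u v = -1 then w u v else 0) * min (max (f u) 0) (max (f v) 0)
      + (if sgn u v = -1 then w u v else 0) * min (max (-f u) 0) (max (-f v) 0)
      + w u v * (|f u| - min |f u| |f v|) with hJ
  -- per-pair gap sums
  have hpair : ∀ u v, ∑ i ∈ Finset.range (n-1), (b (i+1) - b i) * E u v (b (i+1)) = J u v := by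
    intro u v
    have hsplit : ∀ i ∈ Finset.range (n-1), (b (i+1) - b i) * E u v (b (i+1)) =
        (2 * (if sgn u v = 1 then w u v else 0)) * ((b (i+1) - b i) *
            ((if b (i+1) ≤ f u then (1:ℝ) else 0) * (if b (i+1) ≤ -f v then 1 else 0)))
        + (if sgn u v = -1 then w u v else 0) * ((b (i+1) - b i) *
            ((if b (i+1) ≤ f u then (1:ℝ) else 0) * (if b (i+1) ≤ f v then 1 else 0)))
        + (if sgn u v = -1 then w u v else 0) * ((b (i+1) - b i) *
            ((if b (i+1) ≤ -f u then (1:ℝ) else 0) * (if b (i+1) ≤ -f v then 1 else 0)))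
        + w u v * ((b (i+1) - b i) * (if b (i+1) ≤ |f u| then (1:ℝ) else 0))
        - w u v * ((b (i+1) - b i) *
            ((if b (i+1) ≤ |f u| then (1:ℝ) else 0) * (if b (i+1) ≤ |f v| then 1 else 0))) := by
      intro i _
      rw [hE]; ring
    rw [Finset.sum_congr rfl hsplit, Finset.sum_sub_distrib, Finset.sum_add_distrib,
      Finset.sum_add_distrib, Finset.sum_add_distrib,
      ← Finset.mul_sum, ← Finset.mul_sum, ← Finset.mul_sum, ← Finset.mul_sum, ← Finset.mul_sum,
      hgap2 _ _ (hOKf u) (hOKnf v), hgap2 _ _ (hOKf u) (hOKf v),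
      hgap2 _ _ (hOKnf u) (hOKnf v), hgap1 _ (hOKabs u),
      hgap2 _ _ (hOKabs u) (hOKabs v),
      max_eq_left (abs_nonneg (f u)), max_eq_left (abs_nonneg (f v)), hJ]
    ring
  -- pointwise bound
  have hpt : ∀ u v, J u v + J v u ≤ w u v * |f u - sgn u v * f v| := by
    intro u v
    have hw := hG.w_nonneg u v
    have hws : w v u = w u v := hG.w_symm v u
    have hss : sgn v u = sgn u v := hG.sgn_symm v u
    rcases hG.sgn_pm u v with hs | hs
    · have key := key_ineq (f u) (f v)
      rw [hJ]; simp only [hws, hss, hs]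
      norm_num
      nlinarith [mul_le_mul_of_nonneg_left key hw, min_comm |f v| |f u|,
        min_comm (max (f v) 0) (max (f u) 0), min_comm (max (-f v) 0) (max (-f u) 0)]
    · have key := key_ineq (f u) (-(f v))
      simp only [neg_neg, abs_neg, sub_neg_eq_add] at key
      rw [hJ]; simp only [hws, hss, hs]
      norm_num
      nlinarith [mul_le_mul_of_nonneg_left key hw, min_comm |f v| |f u|,
        min_comm (max (f v) 0) (max (f u) 0), min_comm (max (-f v) 0) (max (-f u) 0)]
  have hGsum : ∑ u, ∑ v, J u v ≤ Tar := by
    have hswap : ∑ u, ∑ v, J v u = ∑ u, ∑ v, J u v := Finset.sum_comm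
    have h2 : ∑ u, ∑ v, (J u v + J v u) = (∑ u, ∑ v, J u v) + (∑ u, ∑ v, J v u) := by
      rw [← Finset.sum_add_distrib]
      exact Finset.sum_congr rfl fun u _ => Finset.sum_add_distrib
    have h3 : ∑ u, ∑ v, (J u v + J v u) ≤ ∑ u, ∑ v, w u v * |f u - sgn u v * f v| :=
      Finset.sum_le_sum fun u _ => Finset.sum_le_sum fun v _ => hpt u v
    rw [hTar]; linarith
  -- the two gap-weighted totals
  have hDD : ∑ i ∈ Finset.range (n-1), (b (i+1) - b i) * Dent (b (i+1)) = D := by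
    have h1 : ∀ i ∈ Finset.range (n-1), (b (i+1) - b i) * Dent (b (i+1))
        = ∑ u, μ u * ((b (i+1) - b i) * (if b (i+1) ≤ |f u| then (1:ℝ) else 0)) := by
      intro i hi
      have hi' : i + 1 < n := by have := Finset.mem_range.mp hi; omega
      rw [hDenf _ (htpos i hi'), Finset.mul_sum]
      exact Finset.sum_congr rfl fun u _ => by ring
    rw [Finset.sum_congr rfl h1, Finset.sum_comm, hD]
    refine Finset.sum_congr rfl fun u _ => ?_
    rw [← Finset.mul_sum, hgap1 _ (hOKabs u), max_eq_left (abs_nonneg (f u))]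
  have hAA : ∑ i ∈ Finset.range (n-1), (b (i+1) - b i) * Numt (b (i+1))
      = ∑ u, ∑ v, J u v := by
    have h1 : ∀ i ∈ Finset.range (n-1), (b (i+1) - b i) * Numt (b (i+1))
        = ∑ u, ∑ v, (b (i+1) - b i) * E u v (b (i+1)) := by
      intro i hi
      have hi' : i + 1 < n := by have := Finset.mem_range.mp hi; omega
      rw [hNum _ (htpos i hi'), Finset.mul_sum]
      exact Finset.sum_congr rfl fun u _ => by rw [Finset.mul_sum]
    rw [Finset.sum_congr rfl h1, Finset.sum_comm]
    refine Finset.sum_congr rfl fun u _ => ?_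
    rw [Finset.sum_comm]
    exact Finset.sum_congr rfl fun v _ => hpair u v
  -- averaging
  have hEx : ∃ i ∈ Finset.range (n-1), Numt (b (i+1)) ≤ R * Dent (b (i+1)) := by
    by_contra hcon
    push_neg at hcon
    have hlt : ∑ i ∈ Finset.range (n-1), (b (i+1) - b i) * (R * Dent (b (i+1)))
        < ∑ i ∈ Finset.range (n-1), (b (i+1) - b i) * Numt (b (i+1)) := by
      apply Finset.sum_lt_sum_of_nonempty
      · exact ⟨0, Finset.mem_range.mpr (by omega)⟩
      · intro i hi
        have hi' : i + 1 < n := by have := Finset.mem_range.mp hi; omega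
        have hgappos : 0 < b (i+1) - b i :=
          sub_pos.mpr (hmono i (i+1) (lt_add_one i) hi')
        exact mul_lt_mul_of_pos_left (hcon i hi) hgappos
    have hLrw : ∑ i ∈ Finset.range (n-1), (b (i+1) - b i) * (R * Dent (b (i+1)))
        = R * D := by
      rw [← hDD, Finset.mul_sum]
      exact Finset.sum_congr rfl fun i _ => by ring
    have hTR : Tar = R * D := by
      rw [hRdef]; field_simp
    rw [hLrw, hAA] at hlt
    linarith
  obtain ⟨i, hi, hile⟩ := hEx
  have hi' : i + 1 < n := by have := Finset.mem_range.mp hi; omega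
  set t' := b (i+1) with ht'
  have ht'pos : 0 < t' := htpos i hi'
  have ht'B : t' ∈ B := hbB (i+1) hi'
  have ht'abs : ∃ u, t' = |f u| := by
    rcases Finset.mem_insert.mp ht'B with h | h
    · exact absurd h ht'pos.ne'
    · obtain ⟨u, _, hu⟩ := Finset.mem_image.mp h; exact ⟨u, hu.symm⟩
  have hsup : t' ≤ ⨆ u, |f u| := by
    obtain ⟨u, hu⟩ := ht'abs
    rw [hu]
    exact le_ciSup (f := fun u => |f u|) (Set.Finite.bddAbove (Set.finite_range fun u => |f u|)) u
  have hub : ∃ u1, t' ≤ |f u1| := by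
    have h1 : i + 1 ≤ n - 1 := by omega
    have hle : t' ≤ b (n-1) := by
      rcases eq_or_lt_of_le h1 with h | h
      · rw [ht', h]
      · exact (hmono (i+1) (n-1) h (by omega)).le
    have hBn : b (n-1) ∈ B := hbB _ (by omega)
    rcases Finset.mem_insert.mp hBn with h | h
    · exfalso; rw [h] at hle; linarith
    · obtain ⟨u1, _, hu1⟩ := Finset.mem_image.mp h
      exact ⟨u1, by rw [hu1]; exact hle⟩
  obtain ⟨u1, hu1⟩ := hub
  have hDenpos : 0 < Dent t' := by
    have hu1mem : u1 ∈ Vp f t' ∪ Vm f t' := by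
      rw [union_pos f t' ht'pos]
      simp [hu1]
    rw [hDent]; simp only [vol]
    exact lt_of_lt_of_le (hμ u1)
      (Finset.single_le_sum (fun u _ => (hμ u).le) hu1mem)
  refine ⟨t', ⟨ht'pos.le, hsup⟩, ?_⟩
  have hbeta : betaR w sgn μ (Vp f t') (Vm f t') = Numt t' / Dent t' := rfl
  rw [hbeta, div_le_iff₀ hDenpos]
  exact hile

end SignedGraph
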